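/- For symmetric T-positive semidefinite tensors A, B ∈ ℝ^{n×n×p}, the inequalities λ_min(A)·Tr(B) ≤ p·⟨A,B⟩ ≤ λ_max(A)·Tr(B) hold, where λ_min(A) and λ_max(A) are the smallest and largest eigenvalues of bcirc(A) and Tr(B) = trace(bcirc(B)). -/

import Mathlib

open Matrix BigOperators

variable {p : ℕ}

/-- Block circulant matrix of a third-order tensor (tensor = family of frontal slices). -/
def bcirc {I J : Type*} (A : Fin p → Matrix I J ℝ) :
    Matrix (Fin p × I) (Fin p × J) ℝ :=
  Matrix.of fun ik jl => A (ik.1 - jl.1) ik.2 jl.2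

/-- T-product of third-order tensors: `(A*B)^(k) = Σ_j A^(k-j) B^(j)` (indices mod p),
which is exactly `fold(bcirc(A) · unfold(B))`. -/
def tProd {I J K : Type*} [Fintype J] (A : Fin p → Matrix I J ℝ)
    (B : Fin p → Matrix J K ℝ) : Fin p → Matrix I K ℝ :=
  fun k => ∑ j : Fin p, A (k - j) * B j

/-- Tensor transpose: transpose each frontal slice and reverse slices 2..p. -/
def ttrans {I J : Type*} (A : Fin p → Matrix I J ℝ) :
    Fin p → Matrix J I ℝ :=
  fun k => (A (-k))ᵀ

/-- Identity tensor: first frontal slice the identity matrix, other slices zero. -/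
def tid (I : Type*) [DecidableEq I] [NeZero p] : Fin p → Matrix I I ℝ :=
  fun k => if k = 0 then 1 else 0

/-- Entrywise (Frobenius) inner product of third-order tensors. -/
def tinner {I J : Type*} [Fintype I] [Fintype J]
    (X Y : Fin p → Matrix I J ℝ) : ℝ :=
  ∑ k, ∑ i, ∑ j, X k i j * Y k i j

/-- Symmetric T-positive semidefinite tensor. -/
def TPSD {I : Type*} [Fintype I] (A : Fin p → Matrix I I ℝ) : Prop :=
  ttrans A = A ∧ ∀ X : Fin p → Matrix I (Fin 1) ℝ, 0 ≤ tinner X (tProd A X)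

/-- Symmetric T-positive definite tensor. -/
def TPD {I : Type*} [Fintype I] (A : Fin p → Matrix I I ℝ) : Prop :=
  ttrans A = A ∧ ∀ X : Fin p → Matrix I (Fin 1) ℝ, X ≠ 0 → 0 < tinner X (tProd A X)

/-- k-fold T-product power of a tensor, with `tpow A 0` the identity tensor. -/
def tpow {I : Type*} [Fintype I] [DecidableEq I] [NeZero p]
    (A : Fin p → Matrix I I ℝ) : ℕ → Fin p → Matrix I I ℝ
  | 0 => tid I
  | k + 1 => tProd A (tpow A k)


private lemma psd_diag_nonneg' {m : Type*} [Fintype m] [DecidableEq m]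
    {N : Matrix m m ℝ} (hN : N.PosSemidef) (i : m) : 0 ≤ N i i := by
  have := hN.dotProduct_mulVec_nonneg (Pi.single i 1)
  simpa [dotProduct, mulVec, Pi.single_apply, Finset.sum_ite_eq', Finset.mul_sum] using this

private lemma trace_mul_bounds' {m : Type*} [Fintype m] [DecidableEq m]
    {M N : Matrix m m ℝ} (hM : M.IsHermitian) (hN : N.PosSemidef) :
    (⨅ i, hM.eigenvalues i) * N.trace ≤ (M * N).trace ∧
    (M * N).trace ≤ (⨆ i, hM.eigenvalues i) * N.trace := by
  rcases isEmpty_or_nonempty m with hm | hm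
  · simp [Matrix.trace, Real.iInf_of_isEmpty, Real.iSup_of_isEmpty]
  have hU : (hM.eigenvectorUnitary : Matrix m m ℝ) * star (hM.eigenvectorUnitary : Matrix m m ℝ) = 1 :=
    (Matrix.mem_unitaryGroup_iff).mp hM.eigenvectorUnitary.2
  set P : Matrix m m ℝ :=
    star (hM.eigenvectorUnitary : Matrix m m ℝ) * N * (hM.eigenvectorUnitary : Matrix m m ℝ) with hP
  have hPpsd : P.PosSemidef := by
    have := hN.conjTranspose_mul_mul_same (hM.eigenvectorUnitary : Matrix m m ℝ)
    simpa [hP, star_eq_conjTranspose] using this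
  have hPdiag : ∀ i, 0 ≤ P i i := psd_diag_nonneg' hPpsd
  have hPtrace : P.trace = N.trace := by
    rw [hP, Matrix.trace_mul_cycle, hU, one_mul]
  have hMN : (M * N).trace = ∑ i, hM.eigenvalues i * P i i := by
    conv_lhs => rw [hM.spectral_theorem, Unitary.conjStarAlgAut_apply]
    rw [mul_assoc, mul_assoc, Matrix.trace_mul_comm, mul_assoc, ← hP, Matrix.trace]
    simp only [Matrix.diag_apply, Matrix.diagonal_mul]
    refine Finset.sum_congr rfl fun i _ => ?_
    simp [mul_comm, RCLike.ofReal]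
  constructor
  · rw [hMN, ← hPtrace, Matrix.trace, Finset.mul_sum]
    refine Finset.sum_le_sum fun i _ => ?_
    exact mul_le_mul_of_nonneg_right (ciInf_le (Finite.bddBelow_range _) i) (hPdiag i)
  · rw [hMN, ← hPtrace, Matrix.trace, Finset.mul_sum]
    refine Finset.sum_le_sum fun i _ => ?_
    exact mul_le_mul_of_nonneg_right (le_ciSup (Finite.bddAbove_range _) i) (hPdiag i)

private lemma bcirc_posSemidef' {n p : ℕ} [NeZero p] (B : Fin p → Matrix (Fin n) (Fin n) ℝ)
    (hB : TPSD B) : (bcirc B).PosSemidef := by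
  have hsym : ∀ (k l : Fin p) (i j : Fin n), B (l - k) j i = B (k - l) i j := by
    intro k l i j
    rw [← congrFun hB.1 (k - l)]
    simp [ttrans, neg_sub]
  have hBH : (bcirc B).IsHermitian := by
    ext ⟨k, i⟩ ⟨l, j⟩
    simp only [conjTranspose_apply, bcirc, Matrix.of_apply, star_trivial]
    exact hsym k l i j
  refine .of_dotProduct_mulVec_nonneg hBH fun x => ?_
  have h0 := hB.2 (fun k => Matrix.of fun i _ => x (k, i))
  simp only [RCLike.re_to_real, star_trivial]
  convert h0 using 1
  · rfl
  simp [tinner, tProd, bcirc, dotProduct, mulVec, Matrix.mul_apply,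
    Fintype.sum_prod_type, Finset.mul_sum, Matrix.sum_apply, Finset.sum_apply]

private lemma bcirc_trace_mul' {n p : ℕ} [NeZero p] (A B : Fin p → Matrix (Fin n) (Fin n) ℝ)
    (hB : TPSD B) : ((bcirc A) * (bcirc B)).trace = (p : ℝ) * tinner A B := by
  have hsym : ∀ (k l : Fin p) (i j : Fin n), B (l - k) j i = B (k - l) i j := by
    intro k l i j
    rw [← congrFun hB.1 (k - l)]
    simp [ttrans, neg_sub]
  rw [Matrix.trace, tinner]
  simp only [Matrix.diag_apply, Matrix.mul_apply, bcirc, Matrix.of_apply,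
    Fintype.sum_prod_type, hsym]
  rw [show (∑ k : Fin p, ∑ i, ∑ l : Fin p, ∑ j, A (k - l) i j * B (k - l) i j)
      = ∑ k : Fin p, ∑ l : Fin p, ∑ i, ∑ j, A (k - l) i j * B (k - l) i j from
    Finset.sum_congr rfl fun k _ => Finset.sum_comm]
  have hre : ∀ k : Fin p, (∑ l : Fin p, ∑ i, ∑ j, A (k - l) i j * B (k - l) i j)
      = ∑ m : Fin p, ∑ i, ∑ j, A m i j * B m i j := fun k =>
    Equiv.sum_comp (Equiv.subLeft k) (fun m => ∑ i, ∑ j, A m i j * B m i j)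
  simp only [hre]
  rw [Finset.sum_const, Finset.card_univ, Fintype.card_fin, nsmul_eq_mul]

/-- λ_min(A)·Tr(B) ≤ p·⟨A,B⟩ ≤ λ_max(A)·Tr(B) for symmetric T-PSD A, B. -/
theorem tpsd_eigenvalue_trace_bounds {n p : ℕ}
    (A B : Fin p → Matrix (Fin n) (Fin n) ℝ) (hA : TPSD A) (hB : TPSD B)
    (hH : (bcirc A).IsHermitian) :
    (⨅ i, hH.eigenvalues i) * (bcirc B).trace ≤ (p : ℝ) * tinner A B ∧
    (p : ℝ) * tinner A B ≤ (⨆ i, hH.eigenvalues i) * (bcirc B).trace := by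
  rcases Nat.eq_zero_or_pos p with hp | hp
  · subst hp
    simp [tinner, Matrix.trace]
  haveI : NeZero p := ⟨hp.ne'⟩
  have htr := bcirc_trace_mul' A B hB
  have hpsd := bcirc_posSemidef' B hB
  obtain ⟨h1, h2⟩ := trace_mul_bounds' hH hpsd
  rw [← htr]
  exact ⟨h1, h2⟩
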